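/- Let P be a row-finite matrix indexed by ℕ×ℕ with entries in a commutative ring, and define the output matrix A by A_{nk} = (P^n)_{0k}. Then every k×k minor of A can be written as a sum of products of minors of size ≤ k of P. Consequently, if P is totally positive of order r over a partially ordered commutative ring, then so is A. -/

import Mathlib

/-- A matrix is row-finite if each of its rows has finitely many nonzero entries. -/
def RowFinite {R : Type*} [Zero R] (P : ℕ → ℕ → R) : Prop :=
  ∀ i : ℕ, {j : ℕ | P i j ≠ 0}.Finite

/-- The output matrix of a production matrix `P`: `A_{nk} = (P^n)_{0k}`. -/
noncomputable def outputMatrix {R : Type*} [CommRing R] (P : ℕ → ℕ → R) : ℕ → ℕ → R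
  | 0, k => if k = 0 then 1 else 0
  | n + 1, k => ∑ᶠ j : ℕ, outputMatrix P n j * P j k

/-- The minor of an infinite matrix `M : ℕ → ℕ → R` with rows `f 0 < f 1 < ⋯`
and columns `g 0 < g 1 < ⋯` (for strictly monotone `f, g`). -/
noncomputable def submatrixDet {R : Type*} [CommRing R] (M : ℕ → ℕ → R) {k : ℕ}
    (f g : Fin k → ℕ) : R :=
  Matrix.det (Matrix.of fun i j => M (f i) (g j))

open Finset in
lemma image_embAux {J : Type} [Fintype J] [LinearOrder J] {k : ℕ} (s : Finset J)
    (hs : s.card = k) (σ : Equiv.Perm (Fin k)) :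
    Finset.image (fun x => (s.orderIsoOfFin hs (σ x) : J)) Finset.univ = s := by
  ext j
  simp only [Finset.mem_image, Finset.mem_univ, true_and]
  constructor
  · rintro ⟨x, rfl⟩; exact (s.orderIsoOfFin hs (σ x)).2
  · intro hj
    exact ⟨σ⁻¹ ((s.orderIsoOfFin hs).symm ⟨j, hj⟩), by simp⟩

lemma cauchyBinetAux {R : Type} [CommRing R] {k : ℕ} {J : Type} [Fintype J]
    [LinearOrder J] (M : Fin k → J → R) (N : J → Fin k → R) :
    Matrix.det (Matrix.of fun i j => ∑ t : J, M i t * N t j)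
      = ∑ s : {s : Finset J // s.card = k},
          Matrix.det (Matrix.of fun i j => M i (s.1.orderIsoOfFin s.2 j))
          * Matrix.det (Matrix.of fun i j => N (s.1.orderIsoOfFin s.2 i) j) := by
  classical
  -- Step a: expand by multilinearity
  have ha : Matrix.det (Matrix.of fun i j => ∑ t : J, M i t * N t j)
      = ∑ r : Fin k → J, (∏ i, M i (r i)) •
          Matrix.det (Matrix.of fun i j => N (r i) j) := by
    have h0 : (Matrix.of fun i j => ∑ t : J, M i t * N t j)
        = fun i => ∑ t : J, M i t • N t := by
      funext i j
      simp [Finset.sum_apply]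
    show Matrix.detRowAlternating (Matrix.of fun i j => ∑ t : J, M i t * N t j) = _
    rw [h0, ← AlternatingMap.coe_multilinearMap]
    rw [(Matrix.detRowAlternating (n := Fin k) (R := R)).toMultilinearMap.map_sum
      (fun i t => M i t • N t)]
    refine Finset.sum_congr rfl fun r _ => ?_
    rw [MultilinearMap.map_smul_univ]
    rfl
  rw [ha]
  -- Step b: restrict to injective r
  set F : (Fin k → J) → R := fun r => (∏ i, M i (r i)) •
      Matrix.det (Matrix.of fun i j => N (r i) j) with hF
  have hb : ∑ r : Fin k → J, F r
      = ∑ r ∈ Finset.univ.filter (fun r => Function.Injective r), F r := by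
    refine (Finset.sum_filter_of_ne fun r _ hne => ?_).symm
    by_contra hinj
    apply hne
    have : Matrix.det (Matrix.of fun i j => N (r i) j) = 0 := by
      apply AlternatingMap.map_eq_zero_of_not_injective
        (Matrix.detRowAlternating) (fun i => N (r i))
      intro hc
      exact hinj (fun a b hab => hc (by simp [hab]))
    simp [hF, this]
  rw [hb]
  -- Step c: as a sum over the subtype
  have hc : ∑ r ∈ Finset.univ.filter (fun r => Function.Injective r), F r
      = ∑ r : {r : Fin k → J // Function.Injective r}, F r.1 := by
    exact Finset.sum_subtype _ (fun x => by simp) F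
  rw [hc]
  -- Step d: reindex by pairs (subset, permutation)
  have hd : ∑ p : {s : Finset J // s.card = k} × Equiv.Perm (Fin k),
        F (fun x => (p.1.1.orderIsoOfFin p.1.2 (p.2 x) : J))
      = ∑ r : {r : Fin k → J // Function.Injective r}, F r.1 := by
    have hcard : ∀ (r : Fin k → J), Function.Injective r →
        (Finset.image r Finset.univ).card = k := by
      intro r hr
      rw [Finset.card_image_of_injective _ hr, Finset.card_univ, Fintype.card_fin]
    refine Fintype.sum_bijective
      (fun p => (⟨fun x => (p.1.1.orderIsoOfFin p.1.2 (p.2 x) : J),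
        fun a b hab => p.2.injective ((p.1.1.orderIsoOfFin p.1.2).injective
          (Subtype.ext hab))⟩ : {r : Fin k → J // Function.Injective r}))
      ⟨?_, ?_⟩ _ _ (fun p => rfl)
    · rintro ⟨⟨s1, hs1⟩, σ1⟩ ⟨⟨s2, hs2⟩, σ2⟩ h
      have h' : (fun x => (s1.orderIsoOfFin hs1 (σ1 x) : J))
          = fun x => (s2.orderIsoOfFin hs2 (σ2 x) : J) := congrArg Subtype.val h
      have hs : s1 = s2 := by
        rw [← image_embAux s1 hs1 σ1, ← image_embAux s2 hs2 σ2, h']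
      subst hs
      have hσ : σ1 = σ2 := by
        ext x
        have := congrFun h' x
        exact congrArg Fin.val ((s1.orderIsoOfFin hs1).injective (Subtype.ext this))
      subst hσ
      rfl
    · rintro ⟨r, hr⟩
      refine ⟨⟨⟨Finset.image r Finset.univ, hcard r hr⟩,
        Equiv.ofBijective (fun x => ((Finset.image r Finset.univ).orderIsoOfFin
          (hcard r hr)).symm ⟨r x, by simp⟩) ?_⟩, ?_⟩
      · rw [← Finite.injective_iff_bijective]
        intro a b hab
        exact hr (Subtype.ext_iff.mp (((Finset.image r Finset.univ).orderIsoOfFin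
          (hcard r hr)).symm.injective hab))
      · refine Subtype.ext (funext fun x => ?_)
        simp [Equiv.ofBijective]
  rw [← hd, Fintype.sum_prod_type]
  -- Step e: evaluate each fiber
  refine Finset.sum_congr rfl fun s _ => ?_
  have he : ∀ σ : Equiv.Perm (Fin k),
      F (fun x => (s.1.orderIsoOfFin s.2 (σ x) : J))
        = (Equiv.Perm.sign σ : ℤ) • ((∏ i, M i (s.1.orderIsoOfFin s.2 (σ i)))
            * Matrix.det (Matrix.of fun i j => N (s.1.orderIsoOfFin s.2 i) j)) := by
    intro σ
    have hperm : Matrix.det (Matrix.of fun i j => N ((s.1.orderIsoOfFin s.2) (σ i)) j)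
        = (Equiv.Perm.sign σ : ℤ) * Matrix.det
            (Matrix.of fun i j => N (s.1.orderIsoOfFin s.2 i) j) := by
      have := Matrix.det_permute σ (Matrix.of fun i j => N (s.1.orderIsoOfFin s.2 i) j)
      simp at this ⊢
      exact this
    simp only [hF, hperm, smul_eq_mul, zsmul_eq_mul]
    ring
  calc ∑ σ : Equiv.Perm (Fin k), F (fun x => (s.1.orderIsoOfFin s.2 (σ x) : J))
      = (∑ σ : Equiv.Perm (Fin k), (Equiv.Perm.sign σ : ℤ) •
          ∏ i, M i (s.1.orderIsoOfFin s.2 (σ i)))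
        * Matrix.det (Matrix.of fun i j => N (s.1.orderIsoOfFin s.2 i) j) := by
        rw [Finset.sum_mul]
        refine Finset.sum_congr rfl fun σ _ => ?_
        rw [he σ]
        simp only [zsmul_eq_mul, smul_eq_mul]
        ring
    _ = _ := by
        congr 1
        rw [← Matrix.det_transpose (Matrix.of fun i j => M i (s.1.orderIsoOfFin s.2 j)),
          Matrix.det_apply]
        rfl

lemma supportFiniteAux {R : Type} [CommRing R] {P : ℕ → ℕ → R} (hP : RowFinite P)
    (n : ℕ) : {j : ℕ | outputMatrix P n j ≠ 0}.Finite := by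
  induction n with
  | zero =>
    apply Set.Finite.subset (Set.finite_singleton 0)
    intro j hj
    by_contra h
    simp only [Set.mem_singleton_iff] at h
    simp [Set.mem_setOf_eq, outputMatrix, h] at hj
  | succ n ih =>
    apply Set.Finite.subset (Set.Finite.biUnion ih
      (fun j _ => hP j))
    intro c hc
    simp only [Set.mem_setOf_eq, outputMatrix] at hc
    by_contra hmem
    apply hc
    have : ∀ j : ℕ, outputMatrix P n j * P j c = 0 := by
      intro j
      by_cases h1 : outputMatrix P n j = 0
      · simp [h1]
      by_cases h2 : P j c = 0
      · simp [h2]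
      have hcm : c ∈ ⋃ j ∈ {j : ℕ | outputMatrix P n j ≠ 0}, {k : ℕ | P j k ≠ 0} :=
        Set.mem_biUnion h1 h2
      exact absurd hcm hmem
    simp [this]

lemma outputMatrixSuccSum {R : Type} [CommRing R] {P : ℕ → ℕ → R}
    (n c : ℕ) {T : Finset ℕ} (hT : {j : ℕ | outputMatrix P n j ≠ 0} ⊆ ↑T) :
    outputMatrix P (n + 1) c = ∑ t ∈ T, outputMatrix P n t * P t c := by
  show (∑ᶠ j : ℕ, outputMatrix P n j * P j c) = _
  apply finsum_eq_finset_sum_of_support_subset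
  intro j hj
  apply hT
  simp only [Function.mem_support] at hj
  intro h0
  simp [Set.mem_setOf_eq, h0] at hj

lemma mainAux {R : Type} [CommRing R] (P : ℕ → ℕ → R) (hP : RowFinite P) :
    ∀ (n k : ℕ) (f g : Fin k → ℕ), StrictMono f → StrictMono g →
      k + ∑ i, f i ≤ n →
      submatrixDet (outputMatrix P) f g ∈
        Subsemiring.closure {x : R | ∃ k' ≤ k, ∃ f' g' : Fin k' → ℕ,
          StrictMono f' ∧ StrictMono g' ∧ x = submatrixDet P f' g'} := by
  intro n
  induction n with
  | zero =>
    intro k f g hf hg hn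
    have hk : k = 0 := by omega
    subst hk
    have : submatrixDet (outputMatrix P) f g = 1 := Matrix.det_fin_zero
    rw [this]; exact one_mem _
  | succ n ih =>
    intro k f g hf hg hn
    match k with
    | 0 =>
      have : submatrixDet (outputMatrix P) f g = 1 := Matrix.det_fin_zero
      rw [this]; exact one_mem _
    | k' + 1 =>
      by_cases hf0 : f 0 = 0
      · -- first row of the minor is e_0 restricted to columns g
        by_cases hg0 : g 0 = 0
        · -- expand along first row
          have hva : submatrixDet (outputMatrix P) f g
              = submatrixDet (outputMatrix P) (f ∘ Fin.succ) (g ∘ Fin.succ) := by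
            show Matrix.det _ = _
            rw [Matrix.det_succ_row_zero]
            rw [Finset.sum_eq_single 0]
            · simp only [Matrix.of_apply, hf0, hg0]
              simp [outputMatrix, Fin.succAbove_zero, submatrixDet]
              rfl
            · intro b _ hb
              have hb' : g b ≠ 0 := by
                have : (0 : Fin (k' + 1)) < b := by
                  rcases Fin.eq_zero_or_eq_succ b with h | ⟨c, rfl⟩
                  · exact absurd h hb
                  · exact Fin.succ_pos c
                have := hg this
                omega
              simp only [Matrix.of_apply, hf0]
              simp [outputMatrix, hb']
            · simp
          rw [hva]
          have hm : k' + ∑ i, (f ∘ Fin.succ) i ≤ n := by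
            have h1 := Fin.sum_univ_succ f
            have h2 : ∑ i : Fin k', (f ∘ Fin.succ) i = ∑ i : Fin k', f i.succ :=
              Finset.sum_congr rfl (fun i _ => rfl)
            rw [h2]
            omega
          refine Subsemiring.closure_mono ?_
            (ih k' (f ∘ Fin.succ) (g ∘ Fin.succ)
              (hf.comp Fin.strictMono_succ) (hg.comp Fin.strictMono_succ) hm)
          rintro x ⟨k'', hk'', f', g', hf', hg', rfl⟩
          exact ⟨k'', by omega, f', g', hf', hg', rfl⟩
        · -- first row is identically zero
          have : submatrixDet (outputMatrix P) f g = 0 := by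
            apply Matrix.det_eq_zero_of_row_eq_zero 0
            intro j
            have hgj : g j ≠ 0 := by
              have := hg.le_iff_le.mpr (Fin.zero_le j)
              omega
            simp only [Matrix.of_apply, hf0]
            simp [outputMatrix, hgj]
          rw [this]; exact zero_mem _
      · -- every row index is positive: apply Cauchy-Binet
        have hfpos : ∀ i, 1 ≤ f i := by
          intro i
          have := hf.le_iff_le.mpr (Fin.zero_le i)
          omega
        set f' : Fin (k' + 1) → ℕ := fun i => f i - 1 with hf'def
        have hf' : StrictMono f' := by
          intro a b hab
          have := hf hab
          have := hfpos a
          simp only [hf'def]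
          omega
        have hfs : ∀ i, f i = f' i + 1 := fun i => by
          have := hfpos i; simp only [hf'def]; omega
        -- a finite set containing the supports of all relevant rows
        have hfin : (⋃ i : Fin (k' + 1), {j : ℕ | outputMatrix P (f' i) j ≠ 0}).Finite :=
          Set.finite_iUnion (fun i => supportFiniteAux hP (f' i))
        set T : Finset ℕ := hfin.toFinset with hTdef
        have hsub : ∀ i : Fin (k' + 1), {j : ℕ | outputMatrix P (f' i) j ≠ 0} ⊆ ↑T := by
          intro i
          rw [hTdef, Set.Finite.coe_toFinset]
          exact Set.subset_iUnion (fun i => {j : ℕ | outputMatrix P (f' i) j ≠ 0}) i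
        have hentry : ∀ (i j : Fin (k' + 1)), outputMatrix P (f i) (g j)
            = ∑ t : ↥T, outputMatrix P (f' i) ↑t * P ↑t (g j) := by
          intro i j
          rw [hfs i, outputMatrixSuccSum (f' i) (g j) (hsub i),
            ← Finset.sum_coe_sort T]
        have hdet : submatrixDet (outputMatrix P) f g
            = Matrix.det (Matrix.of fun i j =>
                ∑ t : ↥T, outputMatrix P (f' i) ↑t * P ↑t (g j)) := by
          unfold submatrixDet
          congr 1
          funext i j
          exact hentry i j
        rw [hdet, cauchyBinetAux (J := {x // x ∈ T}) (fun i t => outputMatrix P (f' i) ↑t)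
          (fun t j => P ↑t (g j))]
        apply sum_mem
        intro s _
        have hmono : StrictMono (fun i => ((s.1.orderIsoOfFin s.2 i : ↥T) : ℕ)) := by
          intro a b hab
          exact_mod_cast (s.1.orderIsoOfFin s.2).strictMono hab
        apply mul_mem
        · -- minor of the output matrix with smaller rows
          have heq : Matrix.det (Matrix.of fun i j =>
              outputMatrix P (f' i) ↑(s.1.orderIsoOfFin s.2 j))
              = submatrixDet (outputMatrix P) f'
                  (fun i => ((s.1.orderIsoOfFin s.2 i : ↥T) : ℕ)) := rfl
          rw [heq]
          apply ih
          · exact hf'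
          · exact hmono
          · have h1 : ∑ i, f i = (k' + 1) + ∑ i, f' i := by
              have : ∀ i, f i = f' i + 1 := hfs
              calc ∑ i, f i = ∑ i, (f' i + 1) := Finset.sum_congr rfl fun i _ => hfs i
                _ = (∑ i, f' i) + (k' + 1) := by
                    rw [Finset.sum_add_distrib]
                    simp
                _ = (k' + 1) + ∑ i, f' i := by ring
            omega
        · -- minor of P itself: a generator
          apply Subsemiring.subset_closure
          exact ⟨k' + 1, le_refl _, _, g, hmono, hg, rfl⟩

/-- Every `k×k` minor of the output matrix `A = 𝒪(P)` is a sum of products of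
minors of size `≤ k` of `P`.  Consequently, if `P` is totally positive of order `r`
over a partially ordered commutative ring, then so is `A`. -/
theorem stmt_16 :
    (∀ (R : Type) [CommRing R] (P : ℕ → ℕ → R), RowFinite P →
      ∀ (k : ℕ) (f g : Fin k → ℕ), StrictMono f → StrictMono g →
        submatrixDet (outputMatrix P) f g ∈
          Subsemiring.closure {x : R | ∃ k' ≤ k, ∃ f' g' : Fin k' → ℕ,
            StrictMono f' ∧ StrictMono g' ∧ x = submatrixDet P f' g'})
    ∧ (∀ (R : Type) [CommRing R] [PartialOrder R] [IsOrderedRing R] (P : ℕ → ℕ → R), RowFinite P → ∀ r : ℕ,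
        (∀ k ≤ r, ∀ f g : Fin k → ℕ, StrictMono f → StrictMono g →
          0 ≤ submatrixDet P f g) →
        ∀ k ≤ r, ∀ f g : Fin k → ℕ, StrictMono f → StrictMono g →
          0 ≤ submatrixDet (outputMatrix P) f g) := by
  constructor
  · intro R _ P hP k f g hf hg
    exact mainAux P hP (k + ∑ i, f i) k f g hf hg le_rfl
  · intro R _ _ _ P hP r hTP k hk f g hf hg
    have hmem := mainAux P hP (k + ∑ i, f i) k f g hf hg le_rfl
    refine Subsemiring.closure_induction
      (p := fun x _ => 0 ≤ x) ?_ le_rfl zero_le_one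
      (fun x y _ _ hx hy => add_nonneg hx hy)
      (fun x y _ _ hx hy => mul_nonneg hx hy) hmem
    rintro x ⟨k', hk', f', g', hf', hg', rfl⟩
    exact hTP k' (le_trans hk' hk) f' g' hf' hg'
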